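/- Let $\phi_k, \ldots, \phi_{N-1} \in \mathbb{R}^d$ with $\|\phi_j\| \le 1$, let $\Phi(N,k) = (I - \phi_{N-1}\phi_{N-1}^\top) \cdots (I - \phi_k \phi_k^\top)$, let $\mu_j \ge 0$ be weights, set $S_{Nk} = \sum_{j=k}^{N-1} \mu_j \phi_j \phi_j^\top$ and $B_{jk} = \sum_{l=k}^{j-1}(\phi_j^\top \phi_l)^2$. Then $\|\Phi(N,k)\|^2 \le 1 - \lambda_{\min}(S_{Nk}) / \big(\sqrt{\max_{k \le j < N} \mu_j} + \sqrt{\sum_{j=k}^{N-1} \mu_j B_{jk}}\big)^2$, provided the denominator is positive. -/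

import Mathlib

open Matrix Finset

lemma auxMulApply {d : ℕ} (A B : Matrix (Fin d) (Fin d) ℝ) (x : EuclideanSpace ℝ (Fin d)) :
    Matrix.toEuclideanLin (A * B) x = Matrix.toEuclideanLin A (Matrix.toEuclideanLin B x) := by
  simp [Matrix.toEuclideanLin_apply, Matrix.mulVec_mulVec]

lemma auxRank1Apply {d : ℕ} (u z : EuclideanSpace ℝ (Fin d)) :
    Matrix.toEuclideanLin (Matrix.vecMulVec (WithLp.ofLp u) (WithLp.ofLp u)) z = (inner ℝ u z : ℝ) • u := by
  ext i
  simp only [Matrix.toEuclideanLin_apply, PiLp.toLp_apply,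
    PiLp.smul_apply, smul_eq_mul, PiLp.inner_apply, RCLike.inner_apply, starRingEnd_apply,
    star_trivial, Matrix.mulVec, dotProduct, Matrix.vecMulVec_apply]
  rw [Finset.sum_mul]
  exact Finset.sum_congr rfl fun j _ => by ring

lemma auxOneApply {d : ℕ} (z : EuclideanSpace ℝ (Fin d)) :
    Matrix.toEuclideanLin (1 : Matrix (Fin d) (Fin d) ℝ) z = z := by
  apply (WithLp.equiv 2 (Fin d → ℝ)).injective
  ext i
  simp [Matrix.toEuclideanLin_apply]

lemma auxDeflate {d : ℕ} (v z : EuclideanSpace ℝ (Fin d)) :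
    Matrix.toEuclideanLin ((1 : Matrix (Fin d) (Fin d) ℝ) - Matrix.vecMulVec (WithLp.ofLp v) (WithLp.ofLp v)) z
      = z - (inner ℝ v z : ℝ) • v := by
  rw [map_sub, LinearMap.sub_apply, auxOneApply, auxRank1Apply]

lemma auxRank1Quad {d : ℕ} (u x : EuclideanSpace ℝ (Fin d)) :
    (inner ℝ x (Matrix.toEuclideanLin (Matrix.vecMulVec (WithLp.ofLp u) (WithLp.ofLp u)) x) : ℝ) = (inner ℝ u x : ℝ) ^ 2 := by
  rw [auxRank1Apply, real_inner_smul_right, real_inner_comm]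
  ring

lemma auxEigen {d : ℕ} (hd : 0 < d) (S : Matrix (Fin d) (Fin d) ℝ) (hSh : S.IsHermitian)
    (x : EuclideanSpace ℝ (Fin d)) :
    (⨅ a, hSh.eigenvalues a) * ‖x‖ ^ 2 ≤ (inner ℝ x (Matrix.toEuclideanLin S x) : ℝ) := by
  haveI : Nonempty (Fin d) := ⟨⟨0, hd⟩⟩
  set b := hSh.eigenvectorBasis with hb
  have hsym : (Matrix.toEuclideanLin S).IsSymmetric :=
    Matrix.isHermitian_iff_isSymmetric.mp hSh
  have hbe : ∀ i, Matrix.toEuclideanLin S (b i) = hSh.eigenvalues i • b i := by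
    intro i
    have h := hSh.mulVec_eigenvectorBasis i
    apply (WithLp.equiv 2 (Fin d → ℝ)).injective
    ext j
    rw [Matrix.toEuclideanLin_apply]
    change (S *ᵥ ⇑(b i)) j = (hSh.eigenvalues i • ⇑(b i)) j
    rw [h]
  have key : (inner ℝ x (Matrix.toEuclideanLin S x) : ℝ)
      = ∑ i, hSh.eigenvalues i * ((inner ℝ (b i) x : ℝ)) ^ 2 := by
    rw [← b.sum_inner_mul_inner x (Matrix.toEuclideanLin S x)]
    refine Finset.sum_congr rfl fun i _ => ?_
    have : (inner ℝ (b i) (Matrix.toEuclideanLin S x) : ℝ)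
        = inner ℝ (Matrix.toEuclideanLin S (b i)) x := (hsym (b i) x).symm
    rw [this, hbe i, real_inner_smul_left, real_inner_comm x (b i)]
    ring
  have hnorm : ‖x‖ ^ 2 = ∑ i, ((inner ℝ (b i) x : ℝ)) ^ 2 := by
    rw [← real_inner_self_eq_norm_sq, ← b.sum_inner_mul_inner x x]
    refine Finset.sum_congr rfl fun i _ => ?_
    rw [real_inner_comm x (b i)]; ring
  rw [key, hnorm, Finset.mul_sum]
  refine Finset.sum_le_sum fun i _ => ?_
  have h1 : (⨅ a, hSh.eigenvalues a) ≤ hSh.eigenvalues i :=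
    ciInf_le (Set.Finite.bddBelow (Set.finite_range _)) i
  exact mul_le_mul_of_nonneg_right h1 (sq_nonneg _)


lemma auxCS (s : Finset ℕ) (f g : ℕ → ℝ) (hf : ∀ j ∈ s, 0 ≤ f j) (hg : ∀ j ∈ s, 0 ≤ g j) :
    ∑ j ∈ s, f j * g j ≤
      Real.sqrt (∑ j ∈ s, f j ^ 2) * Real.sqrt (∑ j ∈ s, g j ^ 2) := by
  have hcs := Finset.sum_mul_sq_le_sq_mul_sq s f g
  have h0 : 0 ≤ ∑ j ∈ s, f j * g j :=
    Finset.sum_nonneg fun j hj => mul_nonneg (hf j hj) (hg j hj)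
  calc ∑ j ∈ s, f j * g j = Real.sqrt ((∑ j ∈ s, f j * g j) ^ 2) := by
        rw [Real.sqrt_sq h0]
    _ ≤ Real.sqrt ((∑ j ∈ s, f j ^ 2) * ∑ j ∈ s, g j ^ 2) := Real.sqrt_le_sqrt hcs
    _ = _ := Real.sqrt_mul (Finset.sum_nonneg fun j _ => sq_nonneg _) _

lemma auxMink (s : Finset ℕ) (w b c : ℕ → ℝ) (hw : ∀ j, 0 ≤ w j)
    (hb : ∀ j, 0 ≤ b j) (hc : ∀ j, 0 ≤ c j) :
    ∑ j ∈ s, w j * (b j + c j) ^ 2 ≤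
      (Real.sqrt (∑ j ∈ s, w j * b j ^ 2) + Real.sqrt (∑ j ∈ s, w j * c j ^ 2)) ^ 2 := by
  set P := ∑ j ∈ s, w j * b j ^ 2 with hP
  set Q := ∑ j ∈ s, w j * c j ^ 2 with hQ
  have hP0 : 0 ≤ P := Finset.sum_nonneg fun j _ => mul_nonneg (hw j) (sq_nonneg _)
  have hQ0 : 0 ≤ Q := Finset.sum_nonneg fun j _ => mul_nonneg (hw j) (sq_nonneg _)
  have hmid : ∑ j ∈ s, w j * (b j * c j) ≤ Real.sqrt P * Real.sqrt Q := by
    have key := auxCS s (fun j => Real.sqrt (w j) * b j) (fun j => Real.sqrt (w j) * c j)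
      (fun j _ => mul_nonneg (Real.sqrt_nonneg _) (hb j))
      (fun j _ => mul_nonneg (Real.sqrt_nonneg _) (hc j))
    have e1 : ∀ j, (Real.sqrt (w j) * b j) * (Real.sqrt (w j) * c j) = w j * (b j * c j) := by
      intro j
      rw [show (Real.sqrt (w j) * b j) * (Real.sqrt (w j) * c j)
          = (Real.sqrt (w j) * Real.sqrt (w j)) * (b j * c j) by ring,
        Real.mul_self_sqrt (hw j)]
    have e2 : ∀ j, (Real.sqrt (w j) * b j) ^ 2 = w j * b j ^ 2 := by
      intro j; rw [mul_pow, Real.sq_sqrt (hw j)]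
    have e3 : ∀ j, (Real.sqrt (w j) * c j) ^ 2 = w j * c j ^ 2 := by
      intro j; rw [mul_pow, Real.sq_sqrt (hw j)]
    simp only [e1, e2, e3] at key
    exact key
  have expand : ∑ j ∈ s, w j * (b j + c j) ^ 2
      = P + 2 * ∑ j ∈ s, w j * (b j * c j) + Q := by
    rw [hP, hQ, Finset.mul_sum, ← Finset.sum_add_distrib, ← Finset.sum_add_distrib]
    exact Finset.sum_congr rfl fun j _ => by ring
  have hrhs : (Real.sqrt P + Real.sqrt Q) ^ 2 = P + 2 * (Real.sqrt P * Real.sqrt Q) + Q := by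
    rw [add_sq, Real.sq_sqrt hP0, Real.sq_sqrt hQ0]; ring
  rw [expand, hrhs]
  linarith

/-- The spectral (ℓ²-operator) norm of a real matrix. -/
noncomputable def matOpNorm {m n : ℕ} (A : Matrix (Fin m) (Fin n) ℝ) : ℝ :=
  ‖LinearMap.toContinuousLinearMap (Matrix.toEuclideanLin A)‖

set_option maxHeartbeats 1000000 in
/-- With Φ(N,k) = (I - φ_{N-1}φ_{N-1}ᵀ)⋯(I - φ_kφ_kᵀ), ‖φⱼ‖ ≤ 1,
weights μⱼ ≥ 0, S_{Nk} = ∑_{j=k}^{N-1} μⱼφⱼφⱼᵀ and B_{jk} = ∑_{l=k}^{j-1}(φⱼᵀφ_l)²,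
‖Φ(N,k)‖² ≤ 1 - λ_min(S_{Nk}) / (√(max_{k≤j<N} μⱼ) + √(∑_j μⱼ B_{jk}))²,
provided the denominator is positive. -/
theorem stmt5 {d : ℕ} (hd : 0 < d) (k N : ℕ) (hkN : k < N)
    (φ : ℕ → EuclideanSpace ℝ (Fin d)) (hφ : ∀ j, ‖φ j‖ ≤ 1)
    (μ : ℕ → ℝ) (hμ : ∀ j, 0 ≤ μ j)
    (Φ : ℕ → Matrix (Fin d) (Fin d) ℝ)
    (hΦk : Φ k = 1)
    (hΦ : ∀ n, k ≤ n →
      Φ (n + 1) = ((1 : Matrix (Fin d) (Fin d) ℝ) - Matrix.vecMulVec (WithLp.ofLp (φ n)) (WithLp.ofLp (φ n))) * Φ n)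
    (S : Matrix (Fin d) (Fin d) ℝ)
    (hS : S = ∑ j ∈ Finset.Ico k N, μ j • Matrix.vecMulVec (WithLp.ofLp (φ j)) (WithLp.ofLp (φ j)))
    (hSh : S.IsHermitian)
    (denom : ℝ)
    (hden : denom = Real.sqrt ((Finset.Ico k N).sup' (Finset.nonempty_Ico.mpr hkN) μ)
        + Real.sqrt (∑ j ∈ Finset.Ico k N, μ j *
            ∑ l ∈ Finset.Ico k j, (inner ℝ (φ j) (φ l) : ℝ) ^ 2))
    (hpos : 0 < denom) :
    matOpNorm (Φ N) ^ 2 ≤ 1 - (⨅ a, hSh.eigenvalues a) / denom ^ 2 := by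
  set lam := ⨅ a, hSh.eigenvalues a with hlam
  set M := (Finset.Ico k N).sup' (Finset.nonempty_Ico.mpr hkN) μ with hM
  set B : ℕ → ℝ := fun j => ∑ l ∈ Finset.Ico k j, (inner ℝ (φ j) (φ l) : ℝ) ^ 2 with hBdef
  set W := ∑ j ∈ Finset.Ico k N, μ j * B j with hW
  have hM0 : 0 ≤ M := le_trans (hμ k) (Finset.le_sup' μ (Finset.mem_Ico.mpr ⟨le_refl k, hkN⟩))
  have hB0 : ∀ j, 0 ≤ B j := fun j => Finset.sum_nonneg fun l _ => sq_nonneg _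
  have hW0 : 0 ≤ W := Finset.sum_nonneg fun j _ => mul_nonneg (hμ j) (hB0 j)
  -- main pointwise estimate
  have main : ∀ x : EuclideanSpace ℝ (Fin d), ∃ s : ℝ, 0 ≤ s ∧ s ≤ ‖x‖ ^ 2 ∧
      ‖Matrix.toEuclideanLin (Φ N) x‖ ^ 2 ≤ ‖x‖ ^ 2 - s ∧
      lam * ‖x‖ ^ 2 ≤ denom ^ 2 * s := by
    intro x
    set y : ℕ → EuclideanSpace ℝ (Fin d) := fun n => Matrix.toEuclideanLin (Φ n) x with hy
    set a : ℕ → ℝ := fun j => (inner ℝ (φ j) (y j) : ℝ) with ha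
    have hyk : y k = x := by rw [hy]; simp only; rw [hΦk, auxOneApply]
    have hystep : ∀ n, k ≤ n → y (n + 1) = y n - a n • φ n := by
      intro n hn
      show Matrix.toEuclideanLin (Φ (n + 1)) x = _
      rw [hΦ n hn, auxMulApply, auxDeflate]
    have hnorm : ∀ n, k ≤ n → ‖y n‖ ^ 2 + ∑ j ∈ Finset.Ico k n, a j ^ 2 ≤ ‖x‖ ^ 2 := by
      intro n hn
      induction n, hn using Nat.le_induction with
      | base => simp [hyk]
      | succ n hn ih =>
        rw [Finset.sum_Ico_succ_top hn]
        have hstep : ‖y (n + 1)‖ ^ 2 ≤ ‖y n‖ ^ 2 - a n ^ 2 := by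
          rw [hystep n hn]
          have hexp := @norm_sub_sq_real _ _ _ (y n) (a n • φ n)
          rw [real_inner_smul_right, real_inner_comm] at hexp
          have han : (inner ℝ (φ n) (y n) : ℝ) = a n := rfl
          rw [han, norm_smul] at hexp
          have hphin : ‖φ n‖ ^ 2 ≤ 1 := by nlinarith [hφ n, norm_nonneg (φ n)]
          have : (‖a n • φ n‖ : ℝ) = ‖a n‖ * ‖φ n‖ := by rw [norm_smul]
          rw [hexp]
          have : (‖a n‖ * ‖φ n‖) ^ 2 = a n ^ 2 * ‖φ n‖ ^ 2 := by
            rw [mul_pow, Real.norm_eq_abs, sq_abs]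
          rw [this]
          nlinarith [sq_nonneg (a n)]
        linarith
    have hdec : ∀ j n, k ≤ n → (inner ℝ (φ j) x : ℝ)
        = (inner ℝ (φ j) (y n) : ℝ) + ∑ l ∈ Finset.Ico k n, a l * (inner ℝ (φ j) (φ l) : ℝ) := by
      intro j n hn
      induction n, hn using Nat.le_induction with
      | base => simp [hyk]
      | succ n hn ih =>
        rw [Finset.sum_Ico_succ_top hn, hystep n hn, inner_sub_right, real_inner_smul_right]
        rw [ih]
        ring
    set s := ∑ j ∈ Finset.Ico k N, a j ^ 2 with hsdef
    have hs0 : 0 ≤ s := Finset.sum_nonneg fun j _ => sq_nonneg _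
    have hNtot := hnorm N hkN.le
    refine ⟨s, hs0, by nlinarith [sq_nonneg ‖y N‖], by
      show ‖y N‖ ^ 2 ≤ ‖x‖ ^ 2 - s; linarith, ?_⟩
    -- the quadratic form bound
    have h1 : lam * ‖x‖ ^ 2 ≤ (inner ℝ x (Matrix.toEuclideanLin S x) : ℝ) := auxEigen hd S hSh x
    have h2 : (inner ℝ x (Matrix.toEuclideanLin S x) : ℝ)
        = ∑ j ∈ Finset.Ico k N, μ j * (inner ℝ (φ j) x : ℝ) ^ 2 := by
      rw [hS, map_sum, LinearMap.sum_apply, inner_sum]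
      refine Finset.sum_congr rfl fun j _ => ?_
      rw [_root_.map_smul, LinearMap.smul_apply, inner_smul_right, auxRank1Quad]
    have h3 : ∀ j ∈ Finset.Ico k N,
        (inner ℝ (φ j) x : ℝ) ^ 2 ≤ (|a j| + Real.sqrt (B j) * Real.sqrt s) ^ 2 := by
      intro j hj
      obtain ⟨hkj, hjN⟩ := Finset.mem_Ico.mp hj
      have hde := hdec j j hkj
      have hyj : (inner ℝ (φ j) (y j) : ℝ) = a j := rfl
      rw [hyj] at hde
      have hsub : ∑ l ∈ Finset.Ico k j, a l ^ 2 ≤ s := by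
        refine Finset.sum_le_sum_of_subset_of_nonneg
          (Finset.Ico_subset_Ico le_rfl hjN.le) fun l _ _ => sq_nonneg _
      have hcs : |∑ l ∈ Finset.Ico k j, a l * (inner ℝ (φ j) (φ l) : ℝ)|
          ≤ Real.sqrt (B j) * Real.sqrt s := by
        have h := Finset.sum_mul_sq_le_sq_mul_sq (Finset.Ico k j) (fun l => a l)
          (fun l => (inner ℝ (φ j) (φ l) : ℝ))
        have hBb : (∑ l ∈ Finset.Ico k j, a l ^ 2) * (∑ l ∈ Finset.Ico k j,
            (inner ℝ (φ j) (φ l) : ℝ) ^ 2) ≤ s * B j := by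
          refine mul_le_mul_of_nonneg_right hsub ?_ |>.trans ?_
          · exact Finset.sum_nonneg fun l _ => sq_nonneg _
          · exact le_refl _
        have habs : |∑ l ∈ Finset.Ico k j, a l * (inner ℝ (φ j) (φ l) : ℝ)|
            = Real.sqrt ((∑ l ∈ Finset.Ico k j, a l * (inner ℝ (φ j) (φ l) : ℝ)) ^ 2) := by
          rw [Real.sqrt_sq_eq_abs]
        rw [habs]
        calc Real.sqrt ((∑ l ∈ Finset.Ico k j, a l * (inner ℝ (φ j) (φ l) : ℝ)) ^ 2)
            ≤ Real.sqrt (s * B j) := Real.sqrt_le_sqrt (le_trans h hBb)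
          _ = Real.sqrt s * Real.sqrt (B j) := Real.sqrt_mul hs0 _
          _ = Real.sqrt (B j) * Real.sqrt s := mul_comm _ _
      have habs2 : |(inner ℝ (φ j) x : ℝ)| ≤ |a j| + Real.sqrt (B j) * Real.sqrt s := by
        rw [hde]
        exact le_trans (abs_add_le _ _) (by linarith [hcs])
      calc (inner ℝ (φ j) x : ℝ) ^ 2 = |(inner ℝ (φ j) x : ℝ)| ^ 2 := (sq_abs _).symm
        _ ≤ (|a j| + Real.sqrt (B j) * Real.sqrt s) ^ 2 :=
            pow_le_pow_left₀ (abs_nonneg _) habs2 2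
    -- assemble with Minkowski
    have h4 : ∑ j ∈ Finset.Ico k N, μ j * (inner ℝ (φ j) x : ℝ) ^ 2
        ≤ ∑ j ∈ Finset.Ico k N, μ j * (|a j| + Real.sqrt (B j) * Real.sqrt s) ^ 2 :=
      Finset.sum_le_sum fun j hj => mul_le_mul_of_nonneg_left (h3 j hj) (hμ j)
    have h5 := auxMink (Finset.Ico k N) μ (fun j => |a j|)
      (fun j => Real.sqrt (B j) * Real.sqrt s) hμ (fun j => abs_nonneg _)
      (fun j => mul_nonneg (Real.sqrt_nonneg _) (Real.sqrt_nonneg _))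
    have hPs : ∑ j ∈ Finset.Ico k N, μ j * |a j| ^ 2 ≤ M * s := by
      rw [hsdef, Finset.mul_sum]
      refine Finset.sum_le_sum fun j hj => ?_
      rw [sq_abs]
      exact mul_le_mul_of_nonneg_right (Finset.le_sup' μ hj) (sq_nonneg _)
    have hQs : ∑ j ∈ Finset.Ico k N, μ j * (Real.sqrt (B j) * Real.sqrt s) ^ 2 = W * s := by
      rw [hW, Finset.sum_mul]
      refine Finset.sum_congr rfl fun j _ => ?_
      rw [mul_pow, Real.sq_sqrt (hB0 j), Real.sq_sqrt hs0]
      ring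
    have h6 : (Real.sqrt (∑ j ∈ Finset.Ico k N, μ j * |a j| ^ 2)
          + Real.sqrt (∑ j ∈ Finset.Ico k N, μ j * (Real.sqrt (B j) * Real.sqrt s) ^ 2)) ^ 2
        ≤ denom ^ 2 * s := by
      have e1 : Real.sqrt (∑ j ∈ Finset.Ico k N, μ j * |a j| ^ 2)
          ≤ Real.sqrt M * Real.sqrt s := by
        rw [← Real.sqrt_mul hM0]
        exact Real.sqrt_le_sqrt hPs
      have e2 : Real.sqrt (∑ j ∈ Finset.Ico k N, μ j * (Real.sqrt (B j) * Real.sqrt s) ^ 2)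
          = Real.sqrt W * Real.sqrt s := by
        rw [hQs, Real.sqrt_mul hW0]
      have e3 : Real.sqrt (∑ j ∈ Finset.Ico k N, μ j * |a j| ^ 2)
            + Real.sqrt (∑ j ∈ Finset.Ico k N, μ j * (Real.sqrt (B j) * Real.sqrt s) ^ 2)
          ≤ denom * Real.sqrt s := by
        rw [hden, e2, add_mul]
        linarith [e1]
      have hnn : 0 ≤ Real.sqrt (∑ j ∈ Finset.Ico k N, μ j * |a j| ^ 2)
            + Real.sqrt (∑ j ∈ Finset.Ico k N, μ j * (Real.sqrt (B j) * Real.sqrt s) ^ 2) :=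
        add_nonneg (Real.sqrt_nonneg _) (Real.sqrt_nonneg _)
      calc _ ≤ (denom * Real.sqrt s) ^ 2 := pow_le_pow_left₀ hnn e3 2
        _ = denom ^ 2 * s := by rw [mul_pow, Real.sq_sqrt hs0]
    calc lam * ‖x‖ ^ 2 ≤ (inner ℝ x (Matrix.toEuclideanLin S x) : ℝ) := h1
      _ = ∑ j ∈ Finset.Ico k N, μ j * (inner ℝ (φ j) x : ℝ) ^ 2 := h2
      _ ≤ ∑ j ∈ Finset.Ico k N, μ j * (|a j| + Real.sqrt (B j) * Real.sqrt s) ^ 2 := h4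
      _ ≤ _ := h5
      _ ≤ denom ^ 2 * s := h6
  -- nonnegativity of the constant
  have hd2 : (0:ℝ) < denom ^ 2 := by positivity
  have hC0 : 0 ≤ 1 - lam / denom ^ 2 := by
    obtain ⟨s, hs0, hs1, _, hs3⟩ := main (EuclideanSpace.single ⟨0, hd⟩ (1:ℝ))
    have hxn : ‖EuclideanSpace.single (⟨0, hd⟩ : Fin d) (1:ℝ)‖ = 1 := by
      simp [EuclideanSpace.norm_single]
    rw [hxn, one_pow] at hs3 hs1
    have hlamle : lam ≤ denom ^ 2 := by nlinarith
    rw [sub_nonneg, div_le_one hd2]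
    exact hlamle
  -- pointwise squared bound
  have hpt : ∀ x : EuclideanSpace ℝ (Fin d),
      ‖Matrix.toEuclideanLin (Φ N) x‖ ^ 2 ≤ (1 - lam / denom ^ 2) * ‖x‖ ^ 2 := by
    intro x
    obtain ⟨s, hs0, hs1, hs2, hs3⟩ := main x
    have : lam / denom ^ 2 * ‖x‖ ^ 2 ≤ s := by
      rw [div_mul_eq_mul_div, div_le_iff₀ hd2]
      linarith [hs3]
    nlinarith [hs2]
  -- conclude operator norm bound
  have hnorm : matOpNorm (Φ N) ≤ Real.sqrt (1 - lam / denom ^ 2) := by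
    apply ContinuousLinearMap.opNorm_le_bound _ (Real.sqrt_nonneg _)
    intro x
    have h := hpt x
    have hx : ‖(LinearMap.toContinuousLinearMap (Matrix.toEuclideanLin (Φ N))) x‖
        = ‖Matrix.toEuclideanLin (Φ N) x‖ := rfl
    rw [hx]
    have : ‖Matrix.toEuclideanLin (Φ N) x‖
        = Real.sqrt (‖Matrix.toEuclideanLin (Φ N) x‖ ^ 2) := by
      rw [Real.sqrt_sq (norm_nonneg _)]
    rw [this]
    calc Real.sqrt (‖Matrix.toEuclideanLin (Φ N) x‖ ^ 2)
        ≤ Real.sqrt ((1 - lam / denom ^ 2) * ‖x‖ ^ 2) := Real.sqrt_le_sqrt h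
      _ = Real.sqrt (1 - lam / denom ^ 2) * ‖x‖ := by
          rw [Real.sqrt_mul hC0, Real.sqrt_sq (norm_nonneg _)]
  have h2 : matOpNorm (Φ N) ^ 2 ≤ Real.sqrt (1 - lam / denom ^ 2) ^ 2 := by
    have h0 : 0 ≤ matOpNorm (Φ N) := norm_nonneg _
    nlinarith
  rw [Real.sq_sqrt hC0] at h2
  exact h2
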